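/- In ℙ𝕊², the projective classes of the two points a = ((1,1),(0,∞)) and b = ((1,∞),(1,1)) of 𝕊² are distinct, the sequence of classes [((1,n),(1,1))] converges both to [a] and to [b] as n → ∞, and consequently [a] and [b] cannot be separated by disjoint open sets in ℙ𝕊². -/

import Mathlib

open scoped ENNReal

/-- The parameter space `𝕊 = {0} ∪ (ℕ₀ × (0,∞])`, realized as a subtype of the
lexicographic product `ℕ ×ₗ ℝ≥0∞`: the pair `(0,0)` represents `0 ∈ 𝕊`, and the pairs
`(i,t)` with `t > 0` represent the elements of `ℕ₀ × (0,∞]`.  The induced subtype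
order is exactly the order of the paper: `0` is the least element, and
`(i,t) < (j,s)` iff `i < j`, or `i = j` and `t < s`. -/
abbrev Sp : Type :=
  {p : ℕ ×ₗ ℝ≥0∞ // ((ofLex p).1 = 0 ∧ (ofLex p).2 = 0) ∨ 0 < (ofLex p).2}

/-- The zero element of `𝕊`. -/
def sZero : Sp := ⟨toLex (0, 0), Or.inl ⟨rfl, rfl⟩⟩

/-- The element `(i,t)` of `𝕊`, for a level `i ∈ ℕ₀` and real part `t ∈ (0,∞]`. -/
def sNode (i : ℕ) (t : ℝ≥0∞) (ht : 0 < t) : Sp := ⟨toLex (i, t), Or.inr ht⟩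

/-- The level `ℒ(x)` of an element of `𝕊` (conventionally `0` on the zero element). -/
def sLevel (x : Sp) : ℕ := (ofLex x.val).1

/-- The real part `ℛ(x)` of an element of `𝕊` (equal to `0` exactly on the zero element). -/
def sRe (x : Sp) : ℝ≥0∞ := (ofLex x.val).2

theorem sNode_ne_sZero {i : ℕ} {t : ℝ≥0∞} (ht : 0 < t) : sNode i t ht ≠ sZero :=
  fun h => ht.ne' (congrArg sRe h)

/-- Scalar multiplication by an extended real `λ`: `λ·(i,t) = (i, λ·t)` and `λ·0 = 0`
(intended for positive scalars `λ ∈ (0,∞]`). -/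
noncomputable def sSMul (l : ℝ≥0∞) (x : Sp) : Sp :=
  if hx : sRe x = 0 then sZero
  else if hl : l = 0 then sZero
  else sNode (sLevel x) (l * sRe x) (ENNReal.mul_pos hl hx)

/-- `𝕊` carries the order topology. -/
instance : TopologicalSpace Sp := Preorder.topology Sp

instance : OrderTopology Sp := ⟨rfl⟩

/-- `𝕊² ∖ {(0,0)}`. -/
abbrev SV2 : Type := {v : Sp × Sp // v ≠ (sZero, sZero)}

/-- Projective equivalence on `𝕊² ∖ {(0,0)}`: `w = λ·v` coordinatewise for some real
`λ ∈ (0,∞)` (i.e. some positive finite extended real). -/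
def projRel2 (v w : SV2) : Prop :=
  ∃ l : ℝ≥0∞, 0 < l ∧ l ≠ ∞ ∧
    w.val.1 = sSMul l v.val.1 ∧ w.val.2 = sSMul l v.val.2

/-- The projectivization `ℙ𝕊²`, with the quotient topology. -/
abbrev PS2 : Type := Quot projRel2

/-- The point `((i,s),(j,t))` of `𝕊² ∖ {(0,0)}`. -/
def pt2 (i j : ℕ) (s t : ℝ≥0∞) (hs : 0 < s) (ht : 0 < t) : SV2 :=
  ⟨(sNode i s hs, sNode j t ht), fun h => sNode_ne_sZero hs (congrArg Prod.fst h)⟩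

/-- The point `a = ((1,1),(0,∞)) ∈ 𝕊²`. -/
noncomputable def a13 : SV2 := pt2 1 0 1 ∞ zero_lt_one (by simp)

/-- The point `b = ((1,∞),(1,1)) ∈ 𝕊²`. -/
noncomputable def b13 : SV2 := pt2 1 1 ∞ 1 (by simp) zero_lt_one




open Filter Topology

lemma sLevel_sNode (i : ℕ) (t : ℝ≥0∞) (ht : 0 < t) : sLevel (sNode i t ht) = i := rfl
lemma sRe_sNode (i : ℕ) (t : ℝ≥0∞) (ht : 0 < t) : sRe (sNode i t ht) = t := rfl

lemma sp_lt_iff {x y : Sp} :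
    x < y ↔ sLevel x < sLevel y ∨ (sLevel x = sLevel y ∧ sRe x < sRe y) := by
  rw [← Subtype.coe_lt_coe]
  exact Prod.Lex.lt_iff

lemma sNode_congr {i : ℕ} {t t' : ℝ≥0∞} (h : t = t') (ht : 0 < t) (ht' : 0 < t') :
    sNode i t ht = sNode i t' ht' := by subst h; rfl

lemma sSMul_sNode {l : ℝ≥0∞} (hl : l ≠ 0) {i : ℕ} {t : ℝ≥0∞} (ht : 0 < t) :
    sSMul l (sNode i t ht) = sNode i (l * t) (ENNReal.mul_pos hl ht.ne') := by
  simp only [sSMul, sRe_sNode, sLevel_sNode]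
  exact (dif_neg ht.ne').trans (dif_neg hl)

lemma sLevel_sSMul {l : ℝ≥0∞} (hl : l ≠ 0) (x : Sp) : sLevel (sSMul l x) = sLevel x := by
  rw [sSMul]
  split_ifs with hx
  · rcases x.property with ⟨h1, _⟩ | h
    · exact h1.symm
    · exact absurd hx h.ne'
  · rfl

/-- The level of the second coordinate is a projective invariant. -/
lemma lvl2_resp : ∀ v w : SV2, projRel2 v w → sLevel v.val.2 = sLevel w.val.2 :=
  fun _ _ ⟨l, hl, _, _, h2⟩ => by rw [h2, sLevel_sSMul hl.ne']

lemma hnt (n : ℕ) : ((n : ℝ≥0∞) + 1) ≠ ∞ := by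
  simp [ENNReal.add_eq_top]

lemma hn0 (n : ℕ) : ((n : ℝ≥0∞) + 1) ≠ 0 :=
  (lt_of_lt_of_le zero_lt_one le_add_self).ne' 

lemma htop : Filter.Tendsto (fun n : ℕ => (n : ℝ≥0∞) + 1) Filter.atTop (𝓝 ∞) := by
  have := ENNReal.tendsto_nat_nhds_top.comp (Filter.tendsto_add_atTop_nat 1)
  exact this.congr fun n => by simp only [Function.comp_apply]; push_cast; ring

lemma hinv : Filter.Tendsto (fun n : ℕ => ((n : ℝ≥0∞) + 1)⁻¹) Filter.atTop (𝓝 0) :=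
  ENNReal.inv_top ▸ ENNReal.tendsto_inv_iff.2 htop

lemma tendsto_A :
    Filter.Tendsto (fun n : ℕ => sNode 1 ((n : ℝ≥0∞) + 1)⁻¹ (ENNReal.inv_pos.2 (hnt n)))
      Filter.atTop (𝓝 (sNode 0 ∞ (by simp))) := by
  rw [tendsto_order]
  constructor
  · intro b hb
    refine Filter.Eventually.of_forall fun n => ?_
    rw [sp_lt_iff] at hb ⊢
    rcases hb with h | ⟨h, _⟩
    · exact absurd h (by simp [sLevel_sNode])
    · exact Or.inl (by simp [sLevel_sNode] at h ⊢; omega)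
  · intro c hc
    have hc2 := sp_lt_iff.mp hc
    have hc1 : 1 ≤ sLevel c := by
      rcases hc2 with h | ⟨_, h⟩
      · simp [sLevel_sNode] at h; omega
      · exact absurd h (by simp [sRe_sNode])
    rcases eq_or_lt_of_le hc1 with h1 | h1
    · have hre : 0 < sRe c := by
        rcases c.property with ⟨h, _⟩ | h
        · exact absurd h1 (by rw [sLevel] at *; omega)
        · exact h
      filter_upwards [hinv.eventually_lt_const hre] with n hn
      rw [sp_lt_iff]
      exact Or.inr ⟨by simpa [sLevel_sNode] using h1, by simpa [sRe_sNode] using hn⟩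
    · refine Filter.Eventually.of_forall fun n => ?_
      rw [sp_lt_iff]
      exact Or.inl (by simpa [sLevel_sNode] using h1)

lemma tendsto_B :
    Filter.Tendsto (fun n : ℕ => sNode 1 ((n : ℝ≥0∞) + 1)
        (lt_of_lt_of_le zero_lt_one le_add_self))
      Filter.atTop (𝓝 (sNode 1 ∞ (by simp))) := by
  rw [tendsto_order]
  constructor
  · intro b hb
    rw [sp_lt_iff] at hb
    rcases hb with h | ⟨h, h2⟩
    · refine Filter.Eventually.of_forall fun n => ?_
      rw [sp_lt_iff]
      exact Or.inl (by simpa [sLevel_sNode] using h)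
    · have h2' : sRe b < ∞ := by simpa [sRe_sNode] using h2
      filter_upwards [htop.eventually_const_lt h2'] with n hn
      rw [sp_lt_iff]
      exact Or.inr ⟨by simpa [sLevel_sNode] using h, by simpa [sRe_sNode] using hn⟩
  · intro c hc
    have hc2 := sp_lt_iff.mp hc
    have h1 : 1 < sLevel c := by
      rcases hc2 with h | ⟨_, h⟩
      · simpa [sLevel_sNode] using h
      · exact absurd h (by simp [sRe_sNode])
    refine Filter.Eventually.of_forall fun n => ?_
    rw [sp_lt_iff]
    exact Or.inl (by simpa [sLevel_sNode] using h1)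

lemma seq_eq (n : ℕ) :
    Quot.mk projRel2
        (pt2 1 1 ((n : ℝ≥0∞) + 1) 1 (lt_of_lt_of_le zero_lt_one le_add_self) zero_lt_one) =
      Quot.mk projRel2
        (pt2 1 1 1 ((n : ℝ≥0∞) + 1)⁻¹ zero_lt_one (ENNReal.inv_pos.2 (hnt n))) := by
  refine Quot.sound ⟨((n : ℝ≥0∞) + 1)⁻¹, ENNReal.inv_pos.2 (hnt n),
    ENNReal.inv_ne_top.2 (hn0 n), ?_, ?_⟩
  · show sNode 1 1 zero_lt_one = sSMul ((n : ℝ≥0∞) + 1)⁻¹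
      (sNode 1 ((n : ℝ≥0∞) + 1) (lt_of_lt_of_le zero_lt_one le_add_self))
    rw [sSMul_sNode (ENNReal.inv_ne_zero.2 (hnt n))]
    exact sNode_congr (ENNReal.inv_mul_cancel (hn0 n) (hnt n)).symm _ _
  · show sNode 1 ((n : ℝ≥0∞) + 1)⁻¹ (ENNReal.inv_pos.2 (hnt n)) =
      sSMul ((n : ℝ≥0∞) + 1)⁻¹ (sNode 1 1 zero_lt_one)
    rw [sSMul_sNode (ENNReal.inv_ne_zero.2 (hnt n))]
    exact sNode_congr (mul_one _).symm _ _

lemma tendA :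
    Filter.Tendsto
      (fun n : ℕ => Quot.mk projRel2
        (pt2 1 1 ((n : ℝ≥0∞) + 1) 1 (lt_of_lt_of_le zero_lt_one le_add_self) zero_lt_one))
      Filter.atTop (𝓝 (Quot.mk projRel2 a13)) := by
  have h : (fun n : ℕ => Quot.mk projRel2
        (pt2 1 1 ((n : ℝ≥0∞) + 1) 1 (lt_of_lt_of_le zero_lt_one le_add_self) zero_lt_one))
      = fun n : ℕ => Quot.mk projRel2
        (pt2 1 1 1 ((n : ℝ≥0∞) + 1)⁻¹ zero_lt_one (ENNReal.inv_pos.2 (hnt n))) :=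
    funext seq_eq
  rw [h]
  refine ((continuous_quot_mk.tendsto a13).comp ?_)
  rw [tendsto_subtype_rng]
  exact Filter.Tendsto.prodMk_nhds tendsto_const_nhds tendsto_A

lemma tendB :
    Filter.Tendsto
      (fun n : ℕ => Quot.mk projRel2
        (pt2 1 1 ((n : ℝ≥0∞) + 1) 1 (lt_of_lt_of_le zero_lt_one le_add_self) zero_lt_one))
      Filter.atTop (𝓝 (Quot.mk projRel2 b13)) := by
  refine ((continuous_quot_mk.tendsto b13).comp ?_)
  rw [tendsto_subtype_rng]
  exact Filter.Tendsto.prodMk_nhds tendsto_B tendsto_const_nhds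

/-- In `ℙ𝕊²`, the classes of `a = ((1,1),(0,∞))` and `b = ((1,∞),(1,1))` are distinct,
the sequence of classes `[((1,n),(1,1))]` converges to both `[a]` and `[b]` as
`n → ∞`, and consequently `[a]` and `[b]` cannot be separated by disjoint open sets. -/
theorem stmt13 :
    Quot.mk projRel2 a13 ≠ Quot.mk projRel2 b13 ∧
    Filter.Tendsto
      (fun n : ℕ => Quot.mk projRel2
        (pt2 1 1 ((n : ℝ≥0∞) + 1) 1 (lt_of_lt_of_le zero_lt_one le_add_self) zero_lt_one))
      Filter.atTop (nhds (Quot.mk projRel2 a13)) ∧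
    Filter.Tendsto
      (fun n : ℕ => Quot.mk projRel2
        (pt2 1 1 ((n : ℝ≥0∞) + 1) 1 (lt_of_lt_of_le zero_lt_one le_add_self) zero_lt_one))
      Filter.atTop (nhds (Quot.mk projRel2 b13)) ∧
    ∀ U V : Set PS2, IsOpen U → IsOpen V →
      Quot.mk projRel2 a13 ∈ U → Quot.mk projRel2 b13 ∈ V → (U ∩ V).Nonempty := by
  
  refine ⟨?_, tendA, tendB, ?_⟩
  · intro h
    have := congrArg (Quot.lift (fun v : SV2 => sLevel v.val.2)
      (fun v w hvw => lvl2_resp v w hvw)) h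
    simp only [Quot.lift_mk] at this
    exact Nat.zero_ne_one this
  · intro U V hU hV haU hbV
    obtain ⟨n, hn⟩ := ((tendA.eventually (hU.mem_nhds haU)).and
      (tendB.eventually (hV.mem_nhds hbV))).exists
    exact ⟨_, hn.1, hn.2⟩
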